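/- If f is m-strongly convex with minimizer z* satisfying ∇f(z*) = 0, then for any z, y and β₂ ∈ (0,1), with v = (z - β₂y)/(1-β₂), the inner product bound ((1-β₁)(v - z*) + β₁(z - z*))ᵀ ∇f(z) ≥ f(z) - f(z*) + (m/2)‖z - z*‖² + (1-β₁)(β₂/(1-β₂))(f(z) - f(y)) holds, where β₁ ∈ [0,1]. -/
import Mathlib


open RealInnerProductSpace

theorem stmt_19 (d : ℕ) (m β₁ β₂ : ℝ) (hm : 0 < m)
    (hβ₁ : 0 ≤ β₁) (hβ₁' : β₁ ≤ 1) (hβ₂ : 0 < β₂) (hβ₂' : β₂ < 1)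
    (f : EuclideanSpace ℝ (Fin d) → ℝ) (G : EuclideanSpace ℝ (Fin d) → EuclideanSpace ℝ (Fin d))
    (hsc : ∀ x y, f x + ⟪G x, y - x⟫ + (m / 2) * ‖y - x‖ ^ 2 ≤ f y)
    (zs : EuclideanSpace ℝ (Fin d)) (hmin : ∀ x, f zs ≤ f x) (hgrad : G zs = 0)
    (z y v : EuclideanSpace ℝ (Fin d))
    (hv : v = (1 / (1 - β₂)) • (z - β₂ • y)) :
    ⟪(1 - β₁) • (v - zs) + β₁ • (z - zs), G z⟫
      ≥ f z - f zs + (m / 2) * ‖z - zs‖ ^ 2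
        + (1 - β₁) * (β₂ / (1 - β₂)) * (f z - f y) := by
  have h12 : (1 : ℝ) - β₂ ≠ 0 := by linarith
  set c : ℝ := (1 - β₁) * (β₂ / (1 - β₂)) with hc
  have hcnn : 0 ≤ c := by
    apply mul_nonneg (by linarith)
    exact div_nonneg hβ₂.le (by linarith)
  have hid : (1 - β₁) • (v - zs) + β₁ • (z - zs)
      = (z - zs) + c • (z - y) := by
    rw [hv, hc]
    match_scalars <;> field_simp <;> ring
  have h1 : ⟪z - zs, G z⟫ ≥ f z - f zs + (m / 2) * ‖z - zs‖ ^ 2 := by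
    have := hsc z zs
    have hsym : ⟪G z, zs - z⟫ = -⟪z - zs, G z⟫ := by
      rw [real_inner_comm]
      rw [show zs - z = -(z - zs) by abel, inner_neg_left]
    have hnorm : ‖zs - z‖ = ‖z - zs‖ := norm_sub_rev _ _
    rw [hsym, hnorm] at this
    linarith
  have h2 : ⟪z - y, G z⟫ ≥ f z - f y := by
    have := hsc z y
    have hsym : ⟪G z, y - z⟫ = -⟪z - y, G z⟫ := by
      rw [real_inner_comm]
      rw [show y - z = -(z - y) by abel, inner_neg_left]
    rw [hsym] at this
    nlinarith [sq_nonneg ‖y - z‖, mul_nonneg (le_of_lt (by linarith : (0:ℝ) < m/2)) (sq_nonneg ‖y - z‖)]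
  rw [hid, inner_add_left, real_inner_smul_left]
  nlinarith [mul_le_mul_of_nonneg_left h2 hcnn]
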